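/- Let δ_0 = δ and δ_{t+1} = P(Binomial(d, δ_t) ≥ d/2) with d ≥ 5 and δ sufficiently small (δ < (2e·d/(d-2))^{-d/(d-4)} suffices). Then -log δ_t ∈ Ω((d/2)^t); in particular, to achieve δ_t ≤ ε it suffices to take t = O(log log(1/ε)). -/

import Mathlib

noncomputable def binTail (n : ℕ) (p : ℝ) (k : ℝ) : ℝ :=
  ∑ j ∈ Finset.range (n + 1),
    if k ≤ (j : ℝ) then (n.choose j : ℝ) * p ^ j * (1 - p) ^ (n - j) else 0

lemma binTail_pos (n : ℕ) (p : ℝ) (hp : 0 < p) (hp1 : p ≤ 1) (k : ℝ) (hk : k ≤ n) :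
    0 < binTail n p k := by
  have h1p : (0:ℝ) ≤ 1 - p := by linarith
  apply Finset.sum_pos'
  · intro j hj
    split <;> positivity
  · refine ⟨n, Finset.self_mem_range_succ n, ?_⟩
    rw [if_pos hk]
    have : n.choose n = 1 := Nat.choose_self n
    rw [this]
    simp
    positivity

lemma binTail_le (d : ℕ) (p : ℝ) (h0 : 0 ≤ p) (h1 : p ≤ 1) :
    binTail d p ((d:ℝ)/2) ≤ 2^d * p^((d+1)/2) := by
  have h1p : (0:ℝ) ≤ 1 - p := by linarith
  have key : ∀ j ∈ Finset.range (d+1),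
      (if (d:ℝ)/2 ≤ (j : ℝ) then (d.choose j : ℝ) * p ^ j * (1 - p) ^ (d - j) else 0)
        ≤ (d.choose j : ℝ) * p^((d+1)/2) := by
    intro j hj
    split
    · next h =>
      have hmj : (d+1)/2 ≤ j := by
        have : (d:ℝ) ≤ 2 * j := by linarith
        have : d ≤ 2 * j := by exact_mod_cast this
        omega
      have hpj : p ^ j ≤ p ^ ((d+1)/2) := pow_le_pow_of_le_one h0 h1 hmj
      have h2 : (1 - p) ^ (d - j) ≤ 1 := pow_le_one₀ h1p (by linarith)
      calc (d.choose j : ℝ) * p ^ j * (1 - p) ^ (d - j)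
          ≤ (d.choose j : ℝ) * p ^ ((d+1)/2) * 1 := by
            apply mul_le_mul (by apply mul_le_mul_of_nonneg_left hpj (by positivity)) h2 (by positivity) (by positivity)
        _ = (d.choose j : ℝ) * p ^ ((d+1)/2) := by ring
    · positivity
  calc binTail d p ((d:ℝ)/2) ≤ ∑ j ∈ Finset.range (d+1), (d.choose j : ℝ) * p^((d+1)/2) :=
        Finset.sum_le_sum key
    _ = (∑ j ∈ Finset.range (d+1), (d.choose j : ℝ)) * p^((d+1)/2) := by
        rw [Finset.sum_mul]
    _ = 2^d * p^((d+1)/2) := by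
        norm_cast
        rw [Nat.sum_range_choose]

set_option maxHeartbeats 1000000 in
theorem directed_tree_doubly_exponential (d : ℕ) (hd : 5 ≤ d) (δ : ℝ)
    (hδpos : 0 < δ)
    (hδsmall : δ < (2 * Real.exp 1 * (d : ℝ) / ((d : ℝ) - 2)) ^
      (-(d : ℝ) / ((d : ℝ) - 4)))
    (δseq : ℕ → ℝ) (h0 : δseq 0 = δ)
    (hrec : ∀ t, δseq (t + 1) = binTail d (δseq t) ((d : ℝ) / 2)) :
    (∃ A > (0 : ℝ), ∃ B ≥ (0 : ℝ), ∀ t : ℕ,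
        A * ((d : ℝ) / 2) ^ t - B ≤ -Real.log (δseq t)) ∧
    (∃ C > (0 : ℝ), ∀ ε : ℝ, 0 < ε → ε < 1 → ∃ t : ℕ,
        δseq t ≤ ε ∧ (t : ℝ) ≤ C * Real.log (Real.log (1 / ε) + 2) + C) := by
  have hdR : (5:ℝ) ≤ (d:ℝ) := by exact_mod_cast hd
  set m : ℕ := (d+1)/2 with hm_def
  have hm3 : 3 ≤ m := by omega
  have hdm : d ≤ 2 * m := by omega
  have hmd : m ≤ d := by omega
  have hmR : ((d:ℝ))/2 ≤ (m:ℝ) := by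
    have : (d:ℝ) ≤ 2 * (m:ℝ) := by exact_mod_cast hdm
    linarith
  have hm3R : (3:ℝ) ≤ (m:ℝ) := by exact_mod_cast hm3
  have hm1R : (2:ℝ) ≤ (m:ℝ) - 1 := by linarith
  set c : ℝ := (2:ℝ) ^ ((d:ℝ)/((m:ℝ)-1)) with hc_def
  have hcpos : 0 < c := Real.rpow_pos_of_pos (by norm_num) _
  have hexp_nonneg : 0 ≤ (d:ℝ)/((m:ℝ)-1) := by positivity
  have hc1 : 1 ≤ c := Real.one_le_rpow (by norm_num) hexp_nonneg
  have hcpow : c ^ (m-1) = 2^d := by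
    rw [hc_def, ← Real.rpow_natCast ((2:ℝ) ^ ((d:ℝ)/((m:ℝ)-1))) (m-1),
      ← Real.rpow_mul (by norm_num)]
    have hcast : ((m-1 : ℕ):ℝ) = (m:ℝ) - 1 := by
      have : 1 ≤ m := by omega
      push_cast [this]; ring
    rw [hcast, div_mul_cancel₀ _ (by linarith : (m:ℝ)-1 ≠ 0), Real.rpow_natCast]
  -- c * threshold ≤ 1
  set s : ℝ := (d:ℝ)/((d:ℝ)-4) with hs_def
  have hspos : 0 < s := by
    apply div_pos (by linarith) (by linarith)
  set X : ℝ := 2 * Real.exp 1 * (d : ℝ) / ((d : ℝ) - 2) with hX_def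
  have he : (2.7:ℝ) < Real.exp 1 := by
    have := Real.exp_one_gt_d9
    linarith
  have hX4 : (4:ℝ) ≤ X := by
    rw [hX_def, le_div_iff₀ (by linarith : (0:ℝ) < (d:ℝ)-2)]
    nlinarith
  have hT : X ^ (-(d:ℝ)/((d:ℝ)-4)) ≤ (2:ℝ) ^ (-(2*s)) := by
    have h1 : -(d:ℝ)/((d:ℝ)-4) = -s := by rw [hs_def]; ring
    rw [h1, Real.rpow_neg (by linarith : (0:ℝ) ≤ X), Real.rpow_neg (by norm_num : (0:ℝ) ≤ (2:ℝ))]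
    have h4 : (4:ℝ) ^ s ≤ X ^ s := Real.rpow_le_rpow (by norm_num) hX4 hspos.le
    have h2 : (2:ℝ) ^ (2*s) ≤ X ^ s := by
      have : (2:ℝ) ^ (2*s) = (4:ℝ) ^ s := by
        rw [show (4:ℝ) = (2:ℝ)^(2:ℝ) by
          rw [show (2:ℝ) = ((2:ℕ):ℝ) by norm_num, Real.rpow_natCast]; norm_num,
          ← Real.rpow_mul (by norm_num)]
      linarith [this]
    exact inv_anti₀ (Real.rpow_pos_of_pos (by norm_num) _) h2
  have hcs : c ≤ (2:ℝ) ^ (2*s) := by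
    rw [hc_def]
    apply Real.rpow_le_rpow_of_exponent_le one_le_two
    have h2s : 2*s = (2*(d:ℝ))/((d:ℝ)-4) := by rw [hs_def]; ring
    rw [h2s, div_le_div_iff₀ (by linarith : (0:ℝ) < (m:ℝ)-1) (by linarith : (0:ℝ) < (d:ℝ)-4)]
    nlinarith [mul_le_mul_of_nonneg_left hmR (by linarith : (0:ℝ) ≤ 2*(d:ℝ))]
  have hcT : c * (X ^ (-(d:ℝ)/((d:ℝ)-4))) ≤ 1 := by
    calc c * (X ^ (-(d:ℝ)/((d:ℝ)-4))) ≤ (2:ℝ)^(2*s) * (2:ℝ)^(-(2*s)) := by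
          apply mul_le_mul hcs hT (Real.rpow_nonneg (by linarith) _) (Real.rpow_nonneg (by norm_num) _)
      _ = 1 := by rw [← Real.rpow_add (by norm_num)]; simp
  set u₀ : ℝ := c * δ with hu0_def
  have hu0pos : 0 < u₀ := by positivity
  have hu0lt1 : u₀ < 1 := by
    calc u₀ < c * (X ^ (-(d:ℝ)/((d:ℝ)-4))) := by
          exact mul_lt_mul_of_pos_left hδsmall hcpos
      _ ≤ 1 := hcT
  -- main induction
  have main : ∀ t, 0 < δseq t ∧ c * δseq t ≤ u₀ ^ (m ^ t) := by
    intro t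
    induction t with
    | zero => rw [h0]; exact ⟨hδpos, by rw [pow_zero, pow_one]⟩
    | succ t ih =>
      obtain ⟨hpos, hle⟩ := ih
      have hmt : m ^ t ≠ 0 := by positivity
      have hlt1 : c * δseq t < 1 :=
        lt_of_le_of_lt hle (pow_lt_one₀ hu0pos.le hu0lt1 hmt)
      have hδle : δseq t ≤ c * δseq t := le_mul_of_one_le_left hpos.le hc1
      have hδt1 : δseq t ≤ 1 := by linarith
      have hpos' : 0 < δseq (t+1) := by
        rw [hrec t]
        exact binTail_pos d _ hpos hδt1 _ (by linarith)
      refine ⟨hpos', ?_⟩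
      have hb : δseq (t+1) ≤ 2^d * δseq t ^ m := by
        rw [hrec t]; exact binTail_le d _ hpos.le hδt1
      calc c * δseq (t+1) ≤ c * (2^d * δseq t ^ m) :=
            mul_le_mul_of_nonneg_left hb hcpos.le
        _ = (c * δseq t) ^ m := by
            rw [← hcpow, mul_pow]
            have : c * c ^ (m-1) = c ^ m := by
              rw [← pow_succ']
              congr 1
              omega
            rw [← mul_assoc, this]
        _ ≤ (u₀ ^ (m ^ t)) ^ m := pow_le_pow_left₀ (by positivity) hle m
        _ = u₀ ^ (m ^ (t+1)) := by rw [← pow_mul, pow_succ]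
  -- Part 1
  set A : ℝ := -Real.log u₀ with hA_def
  have hA : 0 < A := by
    rw [hA_def]
    simp only [neg_pos]
    exact Real.log_neg hu0pos hu0lt1
  have part1 : ∀ t : ℕ, A * ((d : ℝ) / 2) ^ t ≤ -Real.log (δseq t) := by
    intro t
    obtain ⟨hpos, hle⟩ := main t
    have hlog : Real.log (c * δseq t) ≤ (m ^ t : ℕ) * Real.log u₀ := by
      rw [← Real.log_pow]
      exact Real.log_le_log (by positivity) hle
    rw [Real.log_mul hcpos.ne' hpos.ne'] at hlog
    have hlogc : 0 ≤ Real.log c := Real.log_nonneg hc1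
    have h1 : ((m ^ t : ℕ) : ℝ) * A ≤ -Real.log (δseq t) := by
      have : -Real.log (δseq t) ≥ Real.log c - ((m ^ t : ℕ):ℝ) * Real.log u₀ := by linarith
      rw [hA_def]
      linarith
    have h2 : A * ((d : ℝ) / 2) ^ t ≤ ((m ^ t : ℕ) : ℝ) * A := by
      have hcast : ((m ^ t : ℕ) : ℝ) = (m:ℝ) ^ t := by push_cast; ring
      rw [hcast, mul_comm]
      apply mul_le_mul_of_nonneg_right _ hA.le
      exact pow_le_pow_left₀ (by positivity) hmR t
    linarith
  refine ⟨⟨A, hA, 0, le_refl 0, fun t => by linarith [part1 t]⟩, ?_⟩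
  -- Part 2
  set lam : ℝ := Real.log ((d:ℝ)/2) with hlam_def
  have hlam : 0 < lam := Real.log_pos (by linarith)
  refine ⟨1/lam + |Real.log A|/lam + 1, by positivity, ?_⟩
  intro ε hε0 hε1
  set L : ℝ := Real.log (1/ε) with hL_def
  have hL : 0 < L := Real.log_pos (one_lt_one_div hε0 hε1)
  set M : ℝ := L / A with hM_def
  have hMpos : 0 < M := by positivity
  refine ⟨⌈Real.log M / lam⌉₊, ?_, ?_⟩
  · -- δseq t ≤ ε
    set t := ⌈Real.log M / lam⌉₊ with ht_def
    have htlam : Real.log M ≤ (t:ℝ) * lam := by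
      have := Nat.le_ceil (Real.log M / lam)
      rw [div_le_iff₀ hlam] at this
      exact this
    have hdpow : M ≤ ((d:ℝ)/2) ^ t := by
      have hpow : ((d:ℝ)/2) ^ t = Real.exp ((t:ℝ) * lam) := by
        rw [hlam_def, ← Real.log_pow, Real.exp_log (by positivity)]
      rw [hpow, ← Real.exp_log hMpos]
      exact Real.exp_le_exp.mpr htlam
    have h1 : L ≤ A * ((d:ℝ)/2) ^ t := by
      have : A * M ≤ A * ((d:ℝ)/2) ^ t := mul_le_mul_of_nonneg_left hdpow hA.le
      rwa [hM_def, mul_div_cancel₀ _ hA.ne'] at this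
    have h2 : L ≤ -Real.log (δseq t) := le_trans h1 (part1 t)
    have hLε : L = -Real.log ε := by rw [hL_def, one_div, Real.log_inv]
    have hlog : Real.log (δseq t) ≤ Real.log ε := by linarith [hLε ▸ h2]
    have hpos := (main t).1
    calc δseq t = Real.exp (Real.log (δseq t)) := (Real.exp_log hpos).symm
      _ ≤ Real.exp (Real.log ε) := Real.exp_le_exp.mpr hlog
      _ = ε := Real.exp_log hε0
  · -- t bound
    set C := 1/lam + |Real.log A|/lam + 1 with hC_def
    have hC : 0 < C := by positivity
    have hlogL2 : 0 ≤ Real.log (L + 2) := Real.log_nonneg (by linarith)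
    by_cases hM : Real.log M / lam ≤ 0
    · rw [Nat.ceil_eq_zero.mpr hM]
      push_cast
      positivity
    · push_neg at hM
      have hceil : (⌈Real.log M / lam⌉₊ : ℝ) ≤ Real.log M / lam + 1 :=
        le_of_lt (Nat.ceil_lt_add_one hM.le)
      have hlogM : Real.log M ≤ Real.log (L + 2) + |Real.log A| := by
        rw [hM_def, Real.log_div hL.ne' hA.ne']
        have h1 : Real.log L ≤ Real.log (L + 2) := Real.log_le_log hL (by linarith)
        have h2 : -Real.log A ≤ |Real.log A| := neg_le_abs _
        linarith
      have hbound : Real.log M / lam + 1 ≤ C * Real.log (L+2) + C := by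
        have h3 : Real.log M / lam ≤ (Real.log (L+2) + |Real.log A|) / lam := by
          gcongr
        have h4 : (Real.log (L+2) + |Real.log A|) / lam
            = (1/lam) * Real.log (L+2) + |Real.log A|/lam := by ring
        have h5 : (1/lam) * Real.log (L+2) ≤ C * Real.log (L+2) := by
          apply mul_le_mul_of_nonneg_right _ hlogL2
          have : (0:ℝ) ≤ |Real.log A|/lam := by positivity
          rw [hC_def]; linarith
        have h6 : |Real.log A|/lam + 1 ≤ C := by
          have : (0:ℝ) ≤ 1/lam := by positivity
          rw [hC_def]; linarith
        linarith
      exact le_trans hceil hbound
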